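/- For every λ ≥ 0, the minimum over pairs (σ, W) of a sampler kernel σ and a reconstruction kernel W of I((S, X_S) ∧ Y) + λ E[d(X, Y)] equals the minimum of the same objective restricted to pairs in which σ is a conditional point-mass sampler σ(A|x) = 1(A = h(x)) for some map h : 𝒳_ℳ → 𝒜_k. -/

import Mathlib

set_option linter.unusedSectionVars false


noncomputable section

/-- A probability mass function on a finite type. -/
def IsPMF {T : Type*} [Fintype T] (p : T → ℝ) : Prop :=
  (∀ t, 0 ≤ p t) ∧ ∑ t, p t = 1

/-- Mutual information of a joint pmf `Q` on a product of two finite types;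
terms with `Q p = 0` vanish since `0 * log _ = 0`. -/
def mutInfo {α β : Type*} [Fintype α] [Fintype β] (Q : α × β → ℝ) : ℝ :=
  ∑ p : α × β, Q p * Real.log (Q p / ((∑ b, Q (p.1, b)) * (∑ a, Q (a, p.2))))

/-- The family `𝒜_k` of `k`-element subsets of `{1, …, m}`. -/
abbrev SetsK (m k : ℕ) := {A : Finset (Fin m) // A.card = k}

variable {m : ℕ} {X : Fin m → Type} [∀ i, Fintype (X i)] [∀ i, DecidableEq (X i)]
  [∀ i, Nonempty (X i)] {Y : Type} [Fintype Y] [Nonempty Y]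

/-- Restriction of `x ∈ 𝒳_ℳ` to the coordinates in `A`. -/
def restr (A : Finset (Fin m)) (x : ∀ i, X i) : ∀ i : A, X i.1 := fun i => x i.1

/-- The marginal pmf `P_{X_A}` of the coordinates in `A`. -/
def margA (P : (∀ i, X i) → ℝ) (A : Finset (Fin m)) (xA : ∀ i : A, X i.1) : ℝ :=
  ∑ x : ∀ i, X i, if restr A x = xA then P x else 0

/-- The modified distortion `d_A(x_A, y)`. -/
def dAk (P : (∀ i, X i) → ℝ) (d : (∀ i, X i) → Y → ℝ) (A : Finset (Fin m))
    (xA : ∀ i : A, X i.1) (y : Y) : ℝ :=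
  (∑ x : ∀ i, X i, if restr A x = xA then P x * d x y else 0) / margA P A xA

/-- The fixed-set rate distortion function `R_A(Δ)`: the minimum of `I(X_A ∧ Y)` over
joint pmfs of `(X_A, Y)` with first marginal `P_{X_A}` and `E[d_A(X_A,Y)] ≤ Δ`. -/
def RAk (P : (∀ i, X i) → ℝ) (d : (∀ i, X i) → Y → ℝ) (A : Finset (Fin m)) (Δ : ℝ) : ℝ :=
  sInf {r | ∃ Q : (∀ i : A, X i.1) × Y → ℝ, IsPMF Q ∧
    (∀ xA, ∑ y, Q (xA, y) = margA P A xA) ∧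
    (∑ p : (∀ i : A, X i.1) × Y, Q p * dAk P d A p.1 p.2) ≤ Δ ∧ mutInfo Q = r}

/-- `Δ_min,A = Σ_{x_A} P_{X_A}(x_A) min_y d_A(x_A, y)`. -/
def DminA (P : (∀ i, X i) → ℝ) (d : (∀ i, X i) → Y → ℝ) (A : Finset (Fin m)) : ℝ :=
  ∑ xA : ∀ i : A, X i.1,
    margA P A xA * Finset.univ.inf' Finset.univ_nonempty (fun y => dAk P d A xA y)

/-- The joint pmf of `((S, X_S), Y)`:
`Q((A, x_A), y) = (Σ_{x : x|_A = x_A} P(x) σ(A|x)) · W(y|A, x_A)`. -/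
def QSXY (k : ℕ) (P : (∀ i, X i) → ℝ) (σ : (∀ i, X i) → SetsK m k → ℝ)
    (W : ∀ A : SetsK m k, (∀ i : A.1, X i.1) → Y → ℝ) :
    (Σ A : SetsK m k, ∀ i : A.1, X i.1) × Y → ℝ := fun p =>
  (∑ x, if restr p.1.1.1 x = p.1.2 then P x * σ x p.1.1 else 0) * W p.1.1 p.1.2 p.2

/-- The expected distortion `E[d(X,Y)]` under the joint pmf `P(x) σ(A|x) W(y|A,x_A)`. -/
def expDistMRSU (k : ℕ) (P : (∀ i, X i) → ℝ) (d : (∀ i, X i) → Y → ℝ)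
    (σ : (∀ i, X i) → SetsK m k → ℝ)
    (W : ∀ A : SetsK m k, (∀ i : A.1, X i.1) → Y → ℝ) : ℝ :=
  ∑ x : ∀ i, X i, ∑ A : SetsK m k, ∑ y, P x * σ x A * W A (restr A.1 x) y * d x y

/-! ### Auxiliary definitions -/

/-- Marginal of `(S, X_S)`. -/
def muS (k : ℕ) (P : (∀ i, X i) → ℝ) (σ : (∀ i, X i) → SetsK m k → ℝ)
    (s : Σ A : SetsK m k, ∀ i : A.1, X i.1) : ℝ :=
  ∑ x, if restr s.1.1 x = s.2 then P x * σ x s.1 else 0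

lemma QSXY_eq (k : ℕ) (P : (∀ i, X i) → ℝ) (σ : (∀ i, X i) → SetsK m k → ℝ)
    (W : ∀ A : SetsK m k, (∀ i : A.1, X i.1) → Y → ℝ)
    (p : (Σ A : SetsK m k, ∀ i : A.1, X i.1) × Y) :
    QSXY k P σ W p = muS k P σ p.1 * W p.1.1 p.1.2 p.2 := rfl

/-- The deterministic sampler kernel induced by `h`. -/
def detK (k : ℕ) (h : (∀ i, X i) → SetsK m k) : (∀ i, X i) → SetsK m k → ℝ :=
  fun x A => if A = h x then 1 else 0

lemma detK_isPMF (k : ℕ) (h : (∀ i, X i) → SetsK m k) (x : ∀ i, X i) :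
    IsPMF (detK k h x) := by
  constructor
  · intro A; unfold detK; split <;> norm_num
  · simp [detK]

lemma muS_nonneg (k : ℕ) (P : (∀ i, X i) → ℝ) (hP : ∀ x, 0 ≤ P x)
    (σ : (∀ i, X i) → SetsK m k → ℝ) (hσ : ∀ x A, 0 ≤ σ x A)
    (s : Σ A : SetsK m k, ∀ i : A.1, X i.1) : 0 ≤ muS k P σ s := by
  apply Finset.sum_nonneg
  intro x _
  split
  · exact mul_nonneg (hP x) (hσ x s.1)
  · exact le_rfl

lemma muS_eq (k : ℕ) (P : (∀ i, X i) → ℝ) (σ : (∀ i, X i) → SetsK m k → ℝ)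
    (s : Σ A : SetsK m k, ∀ i : A.1, X i.1) :
    muS k P σ s = ∑ x, (if restr s.1.1 x = s.2 then P x else 0) * σ x s.1 := by
  unfold muS
  refine Finset.sum_congr rfl fun x _ => ?_
  split <;> simp

lemma sum_muS (k : ℕ) (P : (∀ i, X i) → ℝ) (hP : IsPMF P)
    (σ : (∀ i, X i) → SetsK m k → ℝ) (hσ : ∀ x, IsPMF (σ x)) :
    ∑ s : Σ A : SetsK m k, ∀ i : A.1, X i.1, muS k P σ s = 1 := by
  rw [← Finset.univ_sigma_univ, Finset.sum_sigma]
  unfold muS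
  have : ∀ A : SetsK m k, ∑ xA : ∀ i : A.1, X i.1, ∑ x : ∀ i, X i,
      (if restr A.1 x = xA then P x * σ x A else 0) = ∑ x : ∀ i, X i, P x * σ x A := by
    intro A
    rw [Finset.sum_comm]
    refine Finset.sum_congr rfl fun x _ => ?_
    simp
  simp_rw [this]
  rw [Finset.sum_comm]
  have : ∀ x : ∀ i, X i, ∑ A : SetsK m k, P x * σ x A = P x := by
    intro x
    rw [← Finset.mul_sum, (hσ x).2, mul_one]
  simp_rw [this]
  exact hP.2


/-- Weight of a deterministic sampler `h` in the decomposition of `σ`. -/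
def wgt (k : ℕ) (σ : (∀ i, X i) → SetsK m k → ℝ) (h : (∀ i, X i) → SetsK m k) : ℝ :=
  ∏ x, σ x (h x)

lemma wgt_nonneg (k : ℕ) (σ : (∀ i, X i) → SetsK m k → ℝ) (hσ : ∀ x A, 0 ≤ σ x A)
    (h : (∀ i, X i) → SetsK m k) : 0 ≤ wgt k σ h :=
  Finset.prod_nonneg fun x _ => hσ x (h x)

lemma sum_wgt (k : ℕ) (σ : (∀ i, X i) → SetsK m k → ℝ) (hσ : ∀ x, IsPMF (σ x)) :
    ∑ h : (∀ i, X i) → SetsK m k, wgt k σ h = 1 := by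
  unfold wgt
  have huniv : (Finset.univ : Finset ((∀ i, X i) → SetsK m k)) =
      Fintype.piFinset fun _ => Finset.univ := Fintype.piFinset_univ.symm
  rw [huniv, Finset.sum_prod_piFinset]
  rw [Finset.prod_congr rfl fun x _ => (hσ x).2]
  exact Finset.prod_const_one

lemma sum_wgt_detK (k : ℕ) (σ : (∀ i, X i) → SetsK m k → ℝ) (hσ : ∀ x, IsPMF (σ x))
    (x₀ : ∀ i, X i) (A : SetsK m k) :
    ∑ h : (∀ i, X i) → SetsK m k, wgt k σ h * detK k h x₀ A = σ x₀ A := by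
  set g : (∀ i, X i) → SetsK m k → ℝ :=
    fun x a => if x = x₀ then (if A = a then σ x a else 0) else σ x a with hg
  have step : ∀ h : (∀ i, X i) → SetsK m k, wgt k σ h * detK k h x₀ A
      = ∏ x, g x (h x) := by
    intro h
    unfold wgt detK
    simp only [hg]
    by_cases hA : A = h x₀
    · rw [if_pos hA, mul_one]
      refine Finset.prod_congr rfl fun x _ => ?_
      by_cases hx : x = x₀
      · subst hx; simp [← hA]
      · simp [hx]
    · rw [if_neg hA, mul_zero]
      symm
      apply Finset.prod_eq_zero (Finset.mem_univ x₀)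
      simp [hA]
  simp_rw [step]
  have huniv : (Finset.univ : Finset ((∀ i, X i) → SetsK m k)) =
      Fintype.piFinset fun _ => Finset.univ := Fintype.piFinset_univ.symm
  rw [huniv, Finset.sum_prod_piFinset]
  have step2 : ∀ x : ∀ i, X i,
      (∑ a : SetsK m k, g x a) = if x = x₀ then σ x₀ A else 1 := by
    intro x
    by_cases hx : x = x₀
    · subst hx; simp [hg, Finset.sum_ite_eq]
    · simp [hg, hx, (hσ x).2]
  rw [Finset.prod_congr rfl fun x _ => step2 x]
  simp

lemma lin_decomp (k : ℕ) (σ : (∀ i, X i) → SetsK m k → ℝ) (hσ : ∀ x, IsPMF (σ x))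
    (g : (∀ i, X i) → SetsK m k → ℝ) :
    ∑ x, ∑ A, σ x A * g x A =
      ∑ h : (∀ i, X i) → SetsK m k, wgt k σ h * ∑ x, ∑ A, detK k h x A * g x A := by
  calc ∑ x, ∑ A, σ x A * g x A
      = ∑ x, ∑ A, ∑ h : (∀ i, X i) → SetsK m k,
          wgt k σ h * (detK k h x A * g x A) := by
        refine Finset.sum_congr rfl fun x _ => Finset.sum_congr rfl fun A _ => ?_
        rw [← sum_wgt_detK k σ hσ x A, Finset.sum_mul]
        exact Finset.sum_congr rfl fun h _ => by ring
    _ = ∑ x, ∑ h : (∀ i, X i) → SetsK m k, ∑ A,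
          wgt k σ h * (detK k h x A * g x A) :=
        Finset.sum_congr rfl fun x _ => Finset.sum_comm
    _ = ∑ h : (∀ i, X i) → SetsK m k, ∑ x, ∑ A,
          wgt k σ h * (detK k h x A * g x A) := Finset.sum_comm
    _ = _ := by
        refine Finset.sum_congr rfl fun h _ => ?_
        rw [Finset.mul_sum]
        exact Finset.sum_congr rfl fun x _ => (Finset.mul_sum _ _ _).symm


/-- The output marginal. -/
def nuY (k : ℕ) (P : (∀ i, X i) → ℝ) (σ : (∀ i, X i) → SetsK m k → ℝ)
    (W : ∀ A : SetsK m k, (∀ i : A.1, X i.1) → Y → ℝ) (y : Y) : ℝ :=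
  ∑ s : Σ A : SetsK m k, ∀ i : A.1, X i.1, muS k P σ s * W s.1 s.2 y

lemma mutInfo_QSXY (k : ℕ) (P : (∀ i, X i) → ℝ) (hP : ∀ x, 0 ≤ P x)
    (σ : (∀ i, X i) → SetsK m k → ℝ) (hσ : ∀ x A, 0 ≤ σ x A)
    (W : ∀ A : SetsK m k, (∀ i : A.1, X i.1) → Y → ℝ) (hW : ∀ A xA, IsPMF (W A xA)) :
    mutInfo (QSXY k P σ W) =
      (∑ s : Σ A : SetsK m k, ∀ i : A.1, X i.1,
        muS k P σ s * ∑ y, W s.1 s.2 y * Real.log (W s.1 s.2 y))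
      - ∑ y, nuY k P σ W y * Real.log (nuY k P σ W y) := by
  unfold mutInfo
  rw [Fintype.sum_prod_type]
  have hrow : ∀ s : Σ A : SetsK m k, ∀ i : A.1, X i.1,
      (∑ y, QSXY k P σ W (s, y)) = muS k P σ s := by
    intro s
    simp_rw [QSXY_eq]
    rw [← Finset.mul_sum, (hW s.1 s.2).2, mul_one]
  have hcol : ∀ y, (∑ s : Σ A : SetsK m k, ∀ i : A.1, X i.1, QSXY k P σ W (s, y))
      = nuY k P σ W y := fun y => rfl
  have hterm : ∀ (s : Σ A : SetsK m k, ∀ i : A.1, X i.1) (y : Y),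
      QSXY k P σ W (s, y) * Real.log (QSXY k P σ W (s, y) /
        ((∑ b, QSXY k P σ W (s, b)) * (∑ a, QSXY k P σ W (a, y))))
      = muS k P σ s * W s.1 s.2 y * Real.log (W s.1 s.2 y)
        - muS k P σ s * W s.1 s.2 y * Real.log (nuY k P σ W y) := by
    intro s y
    rw [hrow, hcol, QSXY_eq]
    show muS k P σ s * W s.1 s.2 y *
        Real.log (muS k P σ s * W s.1 s.2 y / (muS k P σ s * nuY k P σ W y)) = _
    by_cases h0 : muS k P σ s * W s.1 s.2 y = 0
    · rw [h0]; simp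
    · obtain ⟨hμ0, hW0⟩ := mul_ne_zero_iff.mp h0
      have hμ : 0 < muS k P σ s := lt_of_le_of_ne (muS_nonneg k P hP σ hσ s) (Ne.symm hμ0)
      have hWpos : 0 < W s.1 s.2 y := lt_of_le_of_ne ((hW s.1 s.2).1 y) (Ne.symm hW0)
      have hν : 0 < nuY k P σ W y := by
        refine lt_of_lt_of_le (mul_pos hμ hWpos) ?_
        exact Finset.single_le_sum
          (f := fun s' : Σ A : SetsK m k, ∀ i : A.1, X i.1 => muS k P σ s' * W s'.1 s'.2 y)
          (fun s' _ => mul_nonneg (muS_nonneg k P hP σ hσ s') ((hW s'.1 s'.2).1 y))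
          (Finset.mem_univ s)
      rw [mul_div_mul_left _ _ hμ0, Real.log_div (ne_of_gt hWpos) (ne_of_gt hν)]
      ring
  rw [Finset.sum_congr rfl fun s _ => Finset.sum_congr rfl fun y _ => hterm s y]
  rw [Finset.sum_congr rfl fun s _ => Finset.sum_sub_distrib _ _, Finset.sum_sub_distrib]
  congr 1
  · refine Finset.sum_congr rfl fun s _ => ?_
    rw [Finset.mul_sum]
    exact Finset.sum_congr rfl fun y _ => (mul_assoc _ _ _)
  · rw [Finset.sum_comm]
    refine Finset.sum_congr rfl fun y _ => ?_
    show ∑ s : Σ A : SetsK m k, ∀ i : A.1, X i.1,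
        muS k P σ s * W s.1 s.2 y * Real.log (nuY k P σ W y) = _
    rw [← Finset.sum_mul]
    rfl

lemma mutInfo_lb {α β : Type*} [Fintype α] [Fintype β] (Q : α × β → ℝ)
    (h0 : ∀ p, 0 ≤ Q p) (h1 : ∑ p, Q p = 1) :
    -(Fintype.card (α × β) : ℝ) ≤ mutInfo Q := by
  have hrow_le : ∀ a, (∑ b, Q (a, b)) ≤ 1 := by
    intro a
    rw [← h1, Fintype.sum_prod_type]
    exact Finset.single_le_sum (f := fun a' => ∑ b, Q (a', b))
      (fun a' _ => Finset.sum_nonneg fun b _ => h0 _) (Finset.mem_univ a)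
  have hcol_le : ∀ b, (∑ a, Q (a, b)) ≤ 1 := by
    intro b
    rw [← h1, Fintype.sum_prod_type_right]
    exact Finset.single_le_sum (f := fun b' => ∑ a, Q (a, b'))
      (fun b' _ => Finset.sum_nonneg fun a _ => h0 _) (Finset.mem_univ b)
  have hterm : ∀ p : α × β,
      -1 ≤ Q p * Real.log (Q p / ((∑ b, Q (p.1, b)) * (∑ a, Q (a, p.2)))) := by
    intro p
    by_cases ht : Q p = 0
    · rw [ht]; norm_num
    · set t := Q p with htdef
      set a := ∑ b, Q (p.1, b) with hadef
      set b := ∑ a', Q (a', p.2) with hbdef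
      have htpos : 0 < t := lt_of_le_of_ne (h0 p) (Ne.symm ht)
      have hta : t ≤ a := by
        rw [hadef, htdef]
        exact Finset.single_le_sum (f := fun b' => Q (p.1, b'))
          (fun b' _ => h0 _) (Finset.mem_univ p.2)
      have htb : t ≤ b := by
        rw [hbdef, htdef]
        exact Finset.single_le_sum (f := fun a' => Q (a', p.2))
          (fun a' _ => h0 _) (Finset.mem_univ p.1)
      have hapos : 0 < a := lt_of_lt_of_le htpos hta
      have hbpos : 0 < b := lt_of_lt_of_le htpos htb
      have habpos : 0 < a * b := mul_pos hapos hbpos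
      have key : Real.log (a * b / t) ≤ a * b / t - 1 :=
        Real.log_le_sub_one_of_pos (by positivity)
      have hflip : Real.log (t / (a * b)) = -Real.log (a * b / t) := by
        rw [Real.log_div ht (ne_of_gt habpos), Real.log_div (ne_of_gt habpos) ht]
        ring
      have h2 : t * Real.log (a * b / t) ≤ a * b - t := by
        have := mul_le_mul_of_nonneg_left key (le_of_lt htpos)
        calc t * Real.log (a * b / t) ≤ t * (a * b / t - 1) := this
          _ = a * b - t := by field_simp
      have hab1 : a * b ≤ 1 := by nlinarith [hrow_le p.1, hcol_le p.2]
      rw [hflip]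
      nlinarith
  calc -(Fintype.card (α × β) : ℝ) = ∑ _p : α × β, (-1 : ℝ) := by
        simp [Finset.sum_const, Finset.card_univ]
    _ ≤ mutInfo Q := Finset.sum_le_sum fun p _ => hterm p


lemma sum_muS_mul_decomp (k : ℕ) (P : (∀ i, X i) → ℝ)
    (σ : (∀ i, X i) → SetsK m k → ℝ) (hσ : ∀ x, IsPMF (σ x))
    (c : (Σ A : SetsK m k, ∀ i : A.1, X i.1) → ℝ) :
    ∑ s : Σ A : SetsK m k, ∀ i : A.1, X i.1, muS k P σ s * c s =
      ∑ h : (∀ i, X i) → SetsK m k, wgt k σ h *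
        ∑ s : Σ A : SetsK m k, ∀ i : A.1, X i.1, muS k P (detK k h) s * c s := by
  have hg : ∀ τ : (∀ i, X i) → SetsK m k → ℝ,
      (∑ s : Σ A : SetsK m k, ∀ i : A.1, X i.1, muS k P τ s * c s)
      = ∑ x, ∑ A, τ x A *
          (∑ s : Σ A' : SetsK m k, ∀ i : A'.1, X i.1,
            (if A = s.1 then (if restr s.1.1 x = s.2 then P x else 0) else 0) * c s) := by
    intro τ
    have inner : ∀ x : ∀ i, X i,
        (∑ A, τ x A * (∑ s : Σ A' : SetsK m k, ∀ i : A'.1, X i.1,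
            (if A = s.1 then (if restr s.1.1 x = s.2 then P x else 0) else 0) * c s))
        = ∑ s : Σ A' : SetsK m k, ∀ i : A'.1, X i.1,
            ((if restr s.1.1 x = s.2 then P x else 0) * τ x s.1) * c s := by
      intro x
      simp_rw [Finset.mul_sum]
      rw [Finset.sum_comm]
      refine Finset.sum_congr rfl fun s _ => ?_
      have key : ∀ A : SetsK m k,
          τ x A * ((if A = s.1 then (if restr s.1.1 x = s.2 then P x else 0) else 0) * c s)
          = if A = s.1 then ((if restr s.1.1 x = s.2 then P x else 0) * τ x s.1) * c s
            else 0 := by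
        intro A
        by_cases hA : A = s.1
        · rw [if_pos hA, if_pos hA, hA]; ring
        · simp [hA]
      rw [Finset.sum_congr rfl fun A _ => key A, Finset.sum_ite_eq' Finset.univ s.1]
      simp
    calc ∑ s : Σ A : SetsK m k, ∀ i : A.1, X i.1, muS k P τ s * c s
        = ∑ s : Σ A : SetsK m k, ∀ i : A.1, X i.1,
            ∑ x, ((if restr s.1.1 x = s.2 then P x else 0) * τ x s.1) * c s := by
          refine Finset.sum_congr rfl fun s _ => ?_
          rw [muS_eq, Finset.sum_mul]
      _ = ∑ x, ∑ s : Σ A : SetsK m k, ∀ i : A.1, X i.1,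
            ((if restr s.1.1 x = s.2 then P x else 0) * τ x s.1) * c s := Finset.sum_comm
      _ = _ := Finset.sum_congr rfl fun x _ => (inner x).symm
  rw [hg σ, lin_decomp k σ hσ]
  exact Finset.sum_congr rfl fun h _ => by rw [← hg (detK k h)]

lemma expDist_eq (k : ℕ) (P : (∀ i, X i) → ℝ) (d : (∀ i, X i) → Y → ℝ)
    (σ : (∀ i, X i) → SetsK m k → ℝ)
    (W : ∀ A : SetsK m k, (∀ i : A.1, X i.1) → Y → ℝ) :
    expDistMRSU k P d σ W =
      ∑ x, ∑ A, σ x A * (∑ y, P x * W A (restr A.1 x) y * d x y) := by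
  unfold expDistMRSU
  refine Finset.sum_congr rfl fun x _ => Finset.sum_congr rfl fun A _ => ?_
  rw [Finset.mul_sum]
  exact Finset.sum_congr rfl fun y _ => by ring

lemma expDist_decomp (k : ℕ) (P : (∀ i, X i) → ℝ) (d : (∀ i, X i) → Y → ℝ)
    (σ : (∀ i, X i) → SetsK m k → ℝ) (hσ : ∀ x, IsPMF (σ x))
    (W : ∀ A : SetsK m k, (∀ i : A.1, X i.1) → Y → ℝ) :
    expDistMRSU k P d σ W =
      ∑ h : (∀ i, X i) → SetsK m k, wgt k σ h * expDistMRSU k P d (detK k h) W := by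
  rw [expDist_eq, lin_decomp k σ hσ]
  exact Finset.sum_congr rfl fun h _ => by rw [← expDist_eq]

lemma expDist_nonneg (k : ℕ) (P : (∀ i, X i) → ℝ) (hP : ∀ x, 0 ≤ P x)
    (d : (∀ i, X i) → Y → ℝ) (hd : ∀ x y, 0 ≤ d x y)
    (σ : (∀ i, X i) → SetsK m k → ℝ) (hσ : ∀ x A, 0 ≤ σ x A)
    (W : ∀ A : SetsK m k, (∀ i : A.1, X i.1) → Y → ℝ) (hW : ∀ A xA y, 0 ≤ W A xA y) :
    0 ≤ expDistMRSU k P d σ W := by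
  refine Finset.sum_nonneg fun x _ => Finset.sum_nonneg fun A _ =>
    Finset.sum_nonneg fun y _ => ?_
  have := hP x
  have := hσ x A
  have := hW A (restr A.1 x) y
  have := hd x y
  positivity

/-- Main concavity step: some deterministic sampler does at least as well. -/
lemma exists_det_le (k : ℕ) [Nonempty (SetsK m k)]
    (P : (∀ i, X i) → ℝ) (hP : IsPMF P)
    (d : (∀ i, X i) → Y → ℝ) (lam : ℝ)
    (W : ∀ A : SetsK m k, (∀ i : A.1, X i.1) → Y → ℝ) (hW : ∀ A xA, IsPMF (W A xA))
    (σ : (∀ i, X i) → SetsK m k → ℝ) (hσ : ∀ x, IsPMF (σ x)) :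
    ∃ h : (∀ i, X i) → SetsK m k,
      mutInfo (QSXY k P (detK k h) W) + lam * expDistMRSU k P d (detK k h) W ≤
        mutInfo (QSXY k P σ W) + lam * expDistMRSU k P d σ W := by
  have hσ0 : ∀ x A, 0 ≤ σ x A := fun x A => (hσ x).1 A
  set c : (Σ A : SetsK m k, ∀ i : A.1, X i.1) → ℝ :=
    fun s => ∑ y, W s.1 s.2 y * Real.log (W s.1 s.2 y) with hc
  set F : ((∀ i, X i) → SetsK m k → ℝ) → ℝ := fun τ =>
    (∑ s : Σ A : SetsK m k, ∀ i : A.1, X i.1, muS k P τ s * c s)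
      + lam * expDistMRSU k P d τ W with hF
  set Φ : ((∀ i, X i) → SetsK m k → ℝ) → ℝ := fun τ =>
    ∑ y, nuY k P τ W y * Real.log (nuY k P τ W y) with hΦ
  have hobj : ∀ (τ : (∀ i, X i) → SetsK m k → ℝ), (∀ x A, 0 ≤ τ x A) →
      mutInfo (QSXY k P τ W) + lam * expDistMRSU k P d τ W = F τ - Φ τ := by
    intro τ hτ
    rw [mutInfo_QSXY k P hP.1 τ hτ W hW, hF, hΦ]
    ring
  have hdet0 : ∀ (h : (∀ i, X i) → SetsK m k) (x A), 0 ≤ detK k h x A :=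
    fun h x A => (detK_isPMF k h x).1 A
  -- linear part decomposes exactly
  have hFdec : F σ = ∑ h : (∀ i, X i) → SetsK m k, wgt k σ h * F (detK k h) := by
    rw [hF]
    simp only []
    rw [sum_muS_mul_decomp k P σ hσ c, expDist_decomp k P d σ hσ W, Finset.mul_sum]
    rw [← Finset.sum_add_distrib]
    exact Finset.sum_congr rfl fun h _ => by ring
  -- Jensen for the concave part
  have hnu_nonneg : ∀ (h : (∀ i, X i) → SetsK m k) y, 0 ≤ nuY k P (detK k h) W y := by
    intro h y
    exact Finset.sum_nonneg fun s _ =>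
      mul_nonneg (muS_nonneg k P hP.1 _ (hdet0 h) s) ((hW s.1 s.2).1 y)
  have hnudec : ∀ y, nuY k P σ W y =
      ∑ h : (∀ i, X i) → SetsK m k, wgt k σ h * nuY k P (detK k h) W y := by
    intro y
    exact sum_muS_mul_decomp k P σ hσ (fun s => W s.1 s.2 y)
  have hΦle : Φ σ ≤ ∑ h : (∀ i, X i) → SetsK m k, wgt k σ h * Φ (detK k h) := by
    rw [hΦ]
    simp only []
    have hy : ∀ y, nuY k P σ W y * Real.log (nuY k P σ W y) ≤
        ∑ h : (∀ i, X i) → SetsK m k,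
          wgt k σ h * (nuY k P (detK k h) W y * Real.log (nuY k P (detK k h) W y)) := by
      intro y
      have := Real.convexOn_mul_log.map_sum_le
        (t := Finset.univ) (w := fun h : (∀ i, X i) → SetsK m k => wgt k σ h)
        (p := fun h => nuY k P (detK k h) W y)
        (fun h _ => wgt_nonneg k σ hσ0 h) (sum_wgt k σ hσ)
        (fun h _ => Set.mem_Ici.mpr (hnu_nonneg h y))
      simpa [smul_eq_mul, ← hnudec y] using this
    calc ∑ y, nuY k P σ W y * Real.log (nuY k P σ W y)
        ≤ ∑ y, ∑ h : (∀ i, X i) → SetsK m k,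
            wgt k σ h * (nuY k P (detK k h) W y * Real.log (nuY k P (detK k h) W y)) :=
          Finset.sum_le_sum fun y _ => hy y
      _ = _ := by
          rw [Finset.sum_comm]
          exact Finset.sum_congr rfl fun h _ => (Finset.mul_sum _ _ _).symm
  -- pick the best deterministic sampler
  obtain ⟨h₀, _, hmin⟩ := Finset.exists_min_image Finset.univ
    (fun h : (∀ i, X i) → SetsK m k => F (detK k h) - Φ (detK k h)) Finset.univ_nonempty
  refine ⟨h₀, ?_⟩
  rw [hobj σ hσ0, hobj (detK k h₀) (hdet0 h₀)]
  have step1 : ∑ h : (∀ i, X i) → SetsK m k,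
      wgt k σ h * (F (detK k h) - Φ (detK k h)) ≤ F σ - Φ σ := by
    rw [hFdec]
    have : ∑ h : (∀ i, X i) → SetsK m k, wgt k σ h * (F (detK k h) - Φ (detK k h))
        = ∑ h : (∀ i, X i) → SetsK m k, wgt k σ h * F (detK k h)
          - ∑ h : (∀ i, X i) → SetsK m k, wgt k σ h * Φ (detK k h) := by
      rw [← Finset.sum_sub_distrib]
      exact Finset.sum_congr rfl fun h _ => by ring
    rw [this]
    linarith [hΦle]
  refine le_trans ?_ step1
  calc F (detK k h₀) - Φ (detK k h₀)
      = ∑ h : (∀ i, X i) → SetsK m k, wgt k σ h * (F (detK k h₀) - Φ (detK k h₀)) := by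
        rw [← Finset.sum_mul, sum_wgt k σ hσ, one_mul]
    _ ≤ ∑ h : (∀ i, X i) → SetsK m k, wgt k σ h * (F (detK k h) - Φ (detK k h)) :=
        Finset.sum_le_sum fun h _ =>
          mul_le_mul_of_nonneg_left (hmin h (Finset.mem_univ h)) (wgt_nonneg k σ hσ0 h)


lemma QSXY_nonneg (k : ℕ) (P : (∀ i, X i) → ℝ) (hP : ∀ x, 0 ≤ P x)
    (σ : (∀ i, X i) → SetsK m k → ℝ) (hσ : ∀ x A, 0 ≤ σ x A)
    (W : ∀ A : SetsK m k, (∀ i : A.1, X i.1) → Y → ℝ) (hW : ∀ A xA y, 0 ≤ W A xA y) :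
    ∀ p, 0 ≤ QSXY k P σ W p := fun p => by
  rw [QSXY_eq]
  exact mul_nonneg (muS_nonneg k P hP σ hσ p.1) (hW _ _ _)

lemma sum_QSXY (k : ℕ) (P : (∀ i, X i) → ℝ) (hP : IsPMF P)
    (σ : (∀ i, X i) → SetsK m k → ℝ) (hσ : ∀ x, IsPMF (σ x))
    (W : ∀ A : SetsK m k, (∀ i : A.1, X i.1) → Y → ℝ) (hW : ∀ A xA, IsPMF (W A xA)) :
    ∑ p, QSXY k P σ W p = 1 := by
  rw [Fintype.sum_prod_type]
  have hrow : ∀ s : Σ A : SetsK m k, ∀ i : A.1, X i.1,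
      (∑ y, QSXY k P σ W (s, y)) = muS k P σ s := by
    intro s
    simp_rw [QSXY_eq]
    rw [← Finset.mul_sum, (hW s.1 s.2).2, mul_one]
  rw [Finset.sum_congr rfl fun s _ => hrow s]
  exact sum_muS k P hP σ hσ

/-- for every `λ ≥ 0`, the Lagrangian minimum of
`I((S,X_S) ∧ Y) + λ E[d(X,Y)]` over pairs `(σ, W)` equals the minimum over pairs
whose sampler is a conditional point-mass `σ(A|x) = 1(A = h(x))`. -/
theorem stmt17 (k : ℕ) (hk1 : 1 ≤ k) (hkm : k ≤ m)
    (P : (∀ i, X i) → ℝ) (hP : IsPMF P) (hfull : ∀ x, 0 < P x)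
    (d : (∀ i, X i) → Y → ℝ) (hd : ∀ x y, 0 ≤ d x y) (lam : ℝ) (hlam : 0 ≤ lam) :
    sInf {r | ∃ (σ : (∀ i, X i) → SetsK m k → ℝ)
        (W : ∀ A : SetsK m k, (∀ i : A.1, X i.1) → Y → ℝ),
        (∀ x, IsPMF (σ x)) ∧ (∀ A xA, IsPMF (W A xA)) ∧
        mutInfo (QSXY k P σ W) + lam * expDistMRSU k P d σ W = r} =
    sInf {r | ∃ (h : (∀ i, X i) → SetsK m k)
        (W : ∀ A : SetsK m k, (∀ i : A.1, X i.1) → Y → ℝ),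
        (∀ A xA, IsPMF (W A xA)) ∧
        mutInfo (QSXY k P (fun x A => if A = h x then 1 else 0) W) +
          lam * expDistMRSU k P d (fun x A => if A = h x then 1 else 0) W = r} := by
  have hAne : Nonempty (SetsK m k) := by
    obtain ⟨t, -, ht⟩ := Finset.exists_subset_card_eq
      (show k ≤ (Finset.univ : Finset (Fin m)).card by simpa using hkm)
    exact ⟨⟨t, ht⟩⟩
  set C : ℝ := -(Fintype.card ((Σ A : SetsK m k, ∀ i : A.1, X i.1) × Y) : ℝ) with hC
  have hlb : ∀ (σ : (∀ i, X i) → SetsK m k → ℝ)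
      (W : ∀ A : SetsK m k, (∀ i : A.1, X i.1) → Y → ℝ),
      (∀ x, IsPMF (σ x)) → (∀ A xA, IsPMF (W A xA)) →
      C ≤ mutInfo (QSXY k P σ W) + lam * expDistMRSU k P d σ W := by
    intro σ W hσ hW
    have h1 := mutInfo_lb (QSXY k P σ W)
      (QSXY_nonneg k P hP.1 σ (fun x A => (hσ x).1 A) W (fun A xA y => (hW A xA).1 y))
      (sum_QSXY k P hP σ hσ W hW)
    have h2 : 0 ≤ lam * expDistMRSU k P d σ W :=
      mul_nonneg hlam (expDist_nonneg k P hP.1 d hd σ (fun x A => (hσ x).1 A) W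
        (fun A xA y => (hW A xA).1 y))
    rw [hC]
    linarith
  -- uniform reconstruction kernel, to show nonemptiness
  set W0 : ∀ A : SetsK m k, (∀ i : A.1, X i.1) → Y → ℝ :=
    fun _ _ _ => (Fintype.card Y : ℝ)⁻¹ with hW0def
  have hW0 : ∀ A xA, IsPMF (W0 A xA) := by
    intro A xA
    constructor
    · intro y; rw [hW0def]; positivity
    · rw [hW0def]
      simp only [Finset.sum_const, Finset.card_univ, nsmul_eq_mul]
      rw [mul_inv_cancel₀]
      exact_mod_cast Fintype.card_ne_zero
  have h0 : (∀ i, X i) → SetsK m k := fun _ => Classical.arbitrary _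
  have hne2 : Set.Nonempty {r | ∃ (h : (∀ i, X i) → SetsK m k)
      (W : ∀ A : SetsK m k, (∀ i : A.1, X i.1) → Y → ℝ),
      (∀ A xA, IsPMF (W A xA)) ∧
      mutInfo (QSXY k P (fun x A => if A = h x then 1 else 0) W) +
        lam * expDistMRSU k P d (fun x A => if A = h x then 1 else 0) W = r} :=
    ⟨_, h0, W0, hW0, rfl⟩
  have hbdd2 : BddBelow {r | ∃ (h : (∀ i, X i) → SetsK m k)
      (W : ∀ A : SetsK m k, (∀ i : A.1, X i.1) → Y → ℝ),
      (∀ A xA, IsPMF (W A xA)) ∧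
      mutInfo (QSXY k P (fun x A => if A = h x then 1 else 0) W) +
        lam * expDistMRSU k P d (fun x A => if A = h x then 1 else 0) W = r} := by
    refine ⟨C, fun r hr => ?_⟩
    obtain ⟨h', W', hW', hr'⟩ := hr
    exact hr' ▸ hlb _ W' (fun x => detK_isPMF k h' x) hW'
  apply le_antisymm
  · refine csInf_le_csInf ?_ hne2 ?_
    · refine ⟨C, fun r hr => ?_⟩
      obtain ⟨σ, W, hσ, hW, hr'⟩ := hr
      exact hr' ▸ hlb σ W hσ hW
    · rintro r ⟨h, W, hW, hr⟩
      exact ⟨_, W, fun x => detK_isPMF k h x, hW, hr⟩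
  · refine le_csInf ⟨_, _, W0, fun x => detK_isPMF k h0 x, hW0, rfl⟩ ?_
    rintro r ⟨σ, W, hσ, hW, rfl⟩
    obtain ⟨h, hle⟩ := exists_det_le k P hP d lam W hW σ hσ
    exact le_trans (csInf_le hbdd2 ⟨h, W, hW, rfl⟩) hle
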